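/- Nonnegativity of the entropy: for every convex φ : [0,∞) → ℝ with φ(0) = φ(1) = 0 and every p ∈ Δ^N with ⟨u,p⟩ > 0, one has E(p) ≥ 0. Moreover, if φ is strictly convex, then E(p) = 0 if and only if p = α e_0 + λ v + β e_N for some α, β, λ ≥ 0 with α + β + λ = 1. -/

import Mathlib

open Finset Matrix Filter

/-- The (N+1)×(N+1) Moran transition matrix (indices 0,…,N) built from a
type selection vector `s`. -/
noncomputable def moranM (N : ℕ) (s : ℕ → ℝ) : Matrix (Fin (N + 1)) (Fin (N + 1)) ℝ :=
  fun i j =>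
    if (i : ℕ) + 1 = (j : ℕ) then ((j : ℕ) : ℝ) / N * (1 - s (j : ℕ))
    else if (i : ℕ) = (j : ℕ) + 1 then ((N : ℝ) - ((j : ℕ) : ℝ)) / N * s (j : ℕ)
    else if (i : ℕ) = (j : ℕ) then
      1 - ((j : ℕ) : ℝ) / N * (1 - s (j : ℕ)) - ((N : ℝ) - ((j : ℕ) : ℝ)) / N * s (j : ℕ)
    else 0

/-- `s` is a type selection vector: `s 0 = 0`, `s N = 1`, `0 < s i < 1` in the interior. -/
def IsTypeSelection (N : ℕ) (s : ℕ → ℝ) : Prop :=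
  s 0 = 0 ∧ s N = 1 ∧ ∀ i : ℕ, 0 < i → i < N → 0 < s i ∧ s i < 1

/-- The core matrix: the (N−1)×(N−1) submatrix of the Moran matrix on states 1,…,N−1. -/
noncomputable def moranCore (N : ℕ) (s : ℕ → ℝ) : Matrix (Fin (N - 1)) (Fin (N - 1)) ℝ :=
  fun i j =>
    moranM N s ⟨(i : ℕ) + 1, by have := i.isLt; omega⟩ ⟨(j : ℕ) + 1, by have := j.isLt; omega⟩

/-- Embedding of core indices {1,…,N−1} into the full index set {0,…,N}. -/
def embIn (N : ℕ) (i : Fin (N - 1)) : Fin (N + 1) :=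
  ⟨(i : ℕ) + 1, by have := i.isLt; omega⟩

/-- nonnegativity of the entropy: E(p) ≥ 0 for convex φ with
φ(0) = φ(1) = 0; and if φ is strictly convex, E(p) = 0 iff p is a convex
combination of e₀, the zero-extended quasi-stationary vector v, and e_N. -/
theorem moran_entropy_nonneg
    (N : ℕ) (hN : 2 ≤ N) (s : ℕ → ℝ) (hs : IsTypeSelection N s)
    (μ1 : ℝ) (u v : Fin (N - 1) → ℝ)
    (hu : ∀ i, 0 < u i) (hv : ∀ i, 0 < v i)
    (huM : (moranCore N s).vecMul u = μ1 • u)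
    (hMv : (moranCore N s).mulVec v = μ1 • v)
    (hvsum : ∑ i, v i = 1) (huv : ∑ i, u i * v i = 1)
    (vext : Fin (N + 1) → ℝ)
    (hvx0 : vext ⟨0, by omega⟩ = 0) (hvxN : vext (Fin.last N) = 0)
    (hvxi : ∀ i : Fin (N - 1), vext (embIn N i) = v i)
    (φ : ℝ → ℝ) (hφ : ConvexOn ℝ (Set.Ici 0) φ) (hφ0 : φ 0 = 0) (hφ1 : φ 1 = 0)
    (p : Fin (N + 1) → ℝ) (hp : ∀ i, 0 ≤ p i) (hpsum : ∑ i, p i = 1)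
    (hip : 0 < ∑ i : Fin (N - 1), u i * p (embIn N i))
    (E : (Fin (N + 1) → ℝ) → ℝ)
    (hE : ∀ q : Fin (N + 1) → ℝ, E q = ∑ i : Fin (N - 1),
      φ (q (embIn N i) / (v i * ∑ j : Fin (N - 1), u j * q (embIn N j))) * v i * u i) :
    0 ≤ E p ∧
    (StrictConvexOn ℝ (Set.Ici 0) φ →
      (E p = 0 ↔
        ∃ α β lam : ℝ, 0 ≤ α ∧ 0 ≤ β ∧ 0 ≤ lam ∧ α + β + lam = 1 ∧
          p = α • (Pi.single (⟨0, by omega⟩ : Fin (N + 1)) 1 : Fin (N + 1) → ℝ)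
              + lam • vext
              + β • (Pi.single (Fin.last N) 1 : Fin (N + 1) → ℝ))) := by
  
  obtain ⟨M, rfl⟩ : ∃ M, N = M + 2 := ⟨N - 2, by omega⟩

  -- index decomposition
  have hsplit' : ∀ f : Fin (M + 3) → ℝ,
      ∑ i, f i = f ⟨0, by omega⟩ + (∑ j : Fin (M + 1), f (embIn (M + 2) j)) + f (Fin.last (M + 2)) := by
    intro f
    rw [Fin.sum_univ_succ, Fin.sum_univ_castSucc]
    have h1 : ∀ j : Fin (M + 1), f (Fin.succ (Fin.castSucc j)) = f (embIn (M + 2) j) := by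
      intro j; congr 1
    have h2 : Fin.succ (Fin.last (M + 1)) = Fin.last (M + 2) := by
      ext; simp
    rw [h2]
    simp only [h1]
    have h0 : (0 : Fin (M + 3)) = ⟨0, by omega⟩ := rfl
    rw [h0]; ring
  have hsplit : ∀ f : Fin (M + 3) → ℝ,
      ∑ i, f i = f ⟨0, by omega⟩ + (∑ j : Fin (M + 2 - 1), f (embIn (M + 2) j)) + f (Fin.last (M + 2)) :=
    hsplit'
  set S : ℝ := ∑ j : Fin (M + 2 - 1), u j * p (embIn (M + 2) j) with hS
  have hSpos : 0 < S := hip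
  set w : Fin (M + 2 - 1) → ℝ := fun i => v i * u i with hw
  set x : Fin (M + 2 - 1) → ℝ := fun i => p (embIn (M + 2) i) / (v i * S) with hx
  have hwpos : ∀ i, 0 < w i := fun i => mul_pos (hv i) (hu i)
  have hwsum : ∑ i, w i = 1 := by
    rw [← huv]; exact Finset.sum_congr rfl fun i _ => mul_comm _ _
  have hxmem : ∀ i, x i ∈ Set.Ici (0:ℝ) := by
    intro i
    exact div_nonneg (hp _) (le_of_lt (mul_pos (hv i) hSpos))
  have hwx : ∀ i, w i * x i = u i * p (embIn (M + 2) i) / S := by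
    intro i
    have hvne : v i ≠ 0 := (hv i).ne'
    have hSne : S ≠ 0 := hSpos.ne'
    field_simp [hx, hw]
    simp only [hx, hw]; field_simp
  have hxsum : ∑ i, w i * x i = 1 := by
    simp only [hwx]
    rw [← Finset.sum_div, ← hS, div_self hSpos.ne']
  have hEp : E p = ∑ i, w i * φ (x i) := by
    rw [hE]
    exact Finset.sum_congr rfl fun i _ => by simp only [hx, hw, ← hS]; ring
  have hjensen : (0:ℝ) ≤ E p := by
    have := hφ.map_sum_le (t := Finset.univ) (w := w) (p := x)
      (fun i _ => (hwpos i).le) hwsum (fun i _ => hxmem i)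
    simp only [smul_eq_mul] at this
    rw [hxsum] at this
    rw [hEp]
    calc (0:ℝ) = φ 1 := hφ1.symm
    _ ≤ _ := this
  refine ⟨hjensen, fun hsc => ⟨?_, ?_⟩⟩
  · -- forward: E p = 0 → decomposition
    intro hE0
    have hxall : ∀ i, x i = 1 := by
      by_contra hne
      push_neg at hne
      have hconst : ∀ j k : Fin (M + 2 - 1), x j = x k := by
        by_contra hc
        push_neg at hc
        obtain ⟨j, k, hjk⟩ := hc
        have := hsc.map_sum_lt (t := Finset.univ) (w := w) (p := x)
          (fun i _ => hwpos i) hwsum (fun i _ => hxmem i)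
          ⟨j, Finset.mem_univ j, k, Finset.mem_univ k, hjk⟩
        simp only [smul_eq_mul] at this
        rw [hxsum, hφ1, ← hEp, hE0] at this
        exact lt_irrefl 0 this
      obtain ⟨i0, hi0⟩ := hne
      have : ∑ i, w i * x i = x i0 := by
        calc ∑ i, w i * x i = ∑ i, w i * x i0 := by
              exact Finset.sum_congr rfl fun i _ => by rw [hconst i i0]
        _ = (∑ i, w i) * x i0 := by rw [Finset.sum_mul]
        _ = x i0 := by rw [hwsum, one_mul]
      rw [hxsum] at this
      exact hi0 this.symm
    have hpv : ∀ i : Fin (M + 2 - 1), p (embIn (M + 2) i) = S * v i := by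
      intro i
      have := hxall i
      rw [hx] at this
      have hne : v i * S ≠ 0 := (mul_pos (hv i) hSpos).ne'
      field_simp at this
      rw [div_eq_iff (hv i).ne'] at this
      linarith [this]
    refine ⟨p ⟨0, by omega⟩, p (Fin.last (M + 2)), S, hp _, hp _, hSpos.le, ?_, ?_⟩
    · have := hsplit p
      rw [hpsum] at this
      have hmid : ∑ j : Fin (M + 2 - 1), p (embIn (M + 2) j) = S := by
        rw [Finset.sum_congr rfl fun j _ => hpv j, ← Finset.mul_sum, hvsum, mul_one]
      rw [hmid] at this
      linarith
    · funext i
      simp only [Pi.add_apply, Pi.smul_apply, smul_eq_mul]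
      obtain ⟨iv, hiv⟩ := i
      by_cases h0 : iv = 0
      · subst h0
        have e1 : (⟨0, by omega⟩ : Fin (M + 3)) ≠ Fin.last (M + 2) := by
          simp [Fin.ext_iff, Fin.last]
        rw [hvx0, Pi.single_eq_same, Pi.single_eq_of_ne e1, mul_one, mul_zero, mul_zero]
        ring
      · by_cases hL : iv = M + 2
        · subst hL
          have e1 : (⟨M + 2, hiv⟩ : Fin (M + 3)) = Fin.last (M + 2) := rfl
          have e2 : (⟨M + 2, hiv⟩ : Fin (M + 3)) ≠ ⟨0, by omega⟩ := by
            simp [Fin.ext_iff]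
          rw [e1, hvxN, Pi.single_eq_of_ne (e1 ▸ e2), Pi.single_eq_same, mul_one, mul_zero]
          ring
        · have hj : iv - 1 < M + 2 - 1 := by omega
          have he : (⟨iv, hiv⟩ : Fin (M + 3)) = embIn (M + 2) ⟨iv - 1, hj⟩ := by
            simp [embIn, Fin.ext_iff]; omega
          have e1 : embIn (M + 2) ⟨iv - 1, hj⟩ ≠ ⟨0, by omega⟩ := by
            simp [embIn, Fin.ext_iff]
          have e2 : embIn (M + 2) ⟨iv - 1, hj⟩ ≠ Fin.last (M + 2) := by
            simp [embIn, Fin.ext_iff, Fin.last]; omega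
          rw [he, hpv, hvxi, Pi.single_eq_of_ne e1, Pi.single_eq_of_ne e2]
          ring
  · -- backward
    intro ⟨α, β, lam, hα, hβ, hlam, habl, hpdef⟩
    have hpemb : ∀ j : Fin (M + 2 - 1), p (embIn (M + 2) j) = lam * v j := by
      intro j
      rw [hpdef]
      simp only [Pi.add_apply, Pi.smul_apply, smul_eq_mul]
      have e0 : embIn (M + 2) j ≠ ⟨0, by omega⟩ := by
        rw [Ne, Fin.ext_iff]; show ¬ ((j : ℕ) + 1 = 0); omega
      have eN : embIn (M + 2) j ≠ Fin.last (M + 2) := by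
        simp [embIn, Fin.ext_iff, Fin.last]; omega
      rw [Pi.single_eq_of_ne e0, Pi.single_eq_of_ne eN, hvxi j, mul_zero, mul_zero]
      ring
    have hSlam : S = lam := by
      rw [hS]
      calc ∑ j : Fin (M + 2 - 1), u j * p (embIn (M+2) j)
          = ∑ j : Fin (M + 2 - 1), lam * (u j * v j) := by
            exact Finset.sum_congr rfl fun j _ => by rw [hpemb j]; ring
      _ = lam * ∑ j, u j * v j := by rw [Finset.mul_sum]
      _ = lam := by rw [huv, mul_one]
    have hlampos : 0 < lam := hSlam ▸ hSpos
    rw [hEp]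
    have : ∀ i, x i = 1 := by
      intro i
      show p (embIn (M + 2) i) / (v i * S) = 1
      rw [hpemb i, hSlam, mul_comm lam (v i), div_self (mul_pos (hv i) hlampos).ne']
    rw [Finset.sum_eq_zero fun i _ => by rw [this i, hφ1, mul_zero]]
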